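/- At the incoming pipe carrying the maximal entropy, the entropy mix is non-increasing in that pipe's Lax parameter: in the setting of the entropy-mix derivative formula, assume additionally that every incoming mass flux is negative (q̄_j < 0 for j = 1, …, m), that the state of pipe j₀ is subsonic (so ū_{j₀} + c̄_{j₀} > 0), and that s̄_{j₀} ≥ s̄_j for all j = 1, …, m. Then the derivative of the entropy mix g(σ) (the entropy mix s* with pipe j₀'s state moved along its 3-Lax curve, all other pipes fixed at base) satisfies g′(p̄_{j₀}) ≤ 0. -/

import Mathlib

/-- The velocity function `ψ` of the Lax-curve parametrisation. -/
noncomputable def laxPsi (γ ρ p : ℝ) (σ : ℝ) : ℝ :=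
  if σ ≤ p then
    (2 * Real.sqrt (γ * p / ρ) / (γ - 1)) * ((σ / p) ^ ((γ - 1) / (2 * γ)) - 1)
  else
    (σ - p) * Real.sqrt ((1 - (γ - 1) / (γ + 1)) / (ρ * (σ + ((γ - 1) / (γ + 1)) * p)))

/-- The density function `φ` of the Lax-curve parametrisation. -/
noncomputable def laxPhi (γ ρ p : ℝ) (σ : ℝ) : ℝ :=
  if σ ≤ p then
    ρ * (σ / p) ^ (1 / γ)
  else
    ρ * (σ + ((γ - 1) / (γ + 1)) * p) / (((γ - 1) / (γ + 1)) * σ + p)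

lemma laxPsi_self (γ ρ p : ℝ) (hp : p ≠ 0) : laxPsi γ ρ p p = 0 := by
  simp [laxPsi, div_self hp]

lemma laxPhi_self (γ ρ p : ℝ) (hp : p ≠ 0) : laxPhi γ ρ p p = ρ := by
  simp [laxPhi, div_self hp]

lemma hasDerivAt_laxPsi (γ ρ p : ℝ) (hγ : 1 < γ) (hρ : 0 < ρ) (hp : 0 < p) :
    HasDerivAt (laxPsi γ ρ p) (Real.sqrt (γ * p / ρ) / (γ * p)) p := by
  have hγ0 : (0:ℝ) < γ := by linarith
  have hγ1 : (0:ℝ) < γ - 1 := by linarith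
  have hγp1 : (0:ℝ) < γ + 1 := by linarith
  set μ2 : ℝ := (γ - 1) / (γ + 1) with hμ2
  have hμ2pos : 0 < μ2 := div_pos hγ1 hγp1
  have hμ2lt : μ2 < 1 := (div_lt_one hγp1).mpr (by linarith)
  -- rarefaction branch
  have hr : HasDerivAt (fun σ : ℝ =>
      (2 * Real.sqrt (γ * p / ρ) / (γ - 1)) * ((σ / p) ^ ((γ - 1) / (2 * γ)) - 1))
      (Real.sqrt (γ * p / ρ) / (γ * p)) p := by
    have h1 : HasDerivAt (fun σ : ℝ => σ / p) (1 / p) p := by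
      simpa using (hasDerivAt_id p).div_const p
    have h2 := (h1.rpow_const (p := (γ - 1) / (2 * γ)) (Or.inl (by simp [div_self hp.ne']))).sub_const 1
    have h3 := h2.const_mul (2 * Real.sqrt (γ * p / ρ) / (γ - 1))
    refine h3.congr_deriv ?_
    rw [div_self hp.ne', Real.one_rpow]
    field_simp
  -- shock branch
  have hinner : HasDerivAt (fun σ : ℝ => (1 - μ2) / (ρ * (σ + μ2 * p)))
      ((0 * (ρ * (p + μ2 * p)) - (1 - μ2) * (ρ * 1)) / (ρ * (p + μ2 * p)) ^ 2) p := by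
    have hden : HasDerivAt (fun σ : ℝ => ρ * (σ + μ2 * p)) (ρ * 1) p :=
      ((hasDerivAt_id p).add_const (μ2 * p)).const_mul ρ
    exact (hasDerivAt_const p (1 - μ2)).div hden
      (by positivity)
  have hinnerpos : 0 < (1 - μ2) / (ρ * (p + μ2 * p)) := by
    apply div_pos (by linarith) (by positivity)
  have hsqrt := hinner.sqrt hinnerpos.ne'
  have hs : HasDerivAt (fun σ : ℝ =>
      (σ - p) * Real.sqrt ((1 - μ2) / (ρ * (σ + μ2 * p))))
      (Real.sqrt (γ * p / ρ) / (γ * p)) p := by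
    have h4 := ((hasDerivAt_id p).sub_const p).mul hsqrt
    refine h4.congr_deriv ?_
    simp only [id_eq, sub_self, zero_mul, add_zero, one_mul]
    -- √(γp/ρ)/(γp) = √((1-μ2)/(ρ(p+μ2 p)))
    have key : (1 - μ2) / (ρ * (p + μ2 * p)) = (γ * p / ρ) / (γ * p) ^ 2 := by
      rw [hμ2]; field_simp; ring
    rw [key, Real.sqrt_div' (γ * p / ρ) (show (0:ℝ) ≤ (γ * p) ^ 2 by positivity),
      Real.sqrt_sq (by positivity : (0:ℝ) ≤ γ * p)]
  -- glue
  have hl : HasDerivWithinAt (laxPsi γ ρ p) (Real.sqrt (γ * p / ρ) / (γ * p)) (Set.Iic p) p := by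
    apply (hr.hasDerivWithinAt (s := Set.Iic p)).congr
    · intro σ hσ; simp only [laxPsi, if_pos (Set.mem_Iic.mp hσ)]
    · simp only [laxPsi, if_pos le_rfl]
  have hrr : HasDerivWithinAt (laxPsi γ ρ p) (Real.sqrt (γ * p / ρ) / (γ * p)) (Set.Ici p) p := by
    apply (hs.hasDerivWithinAt (s := Set.Ici p)).congr
    · intro σ hσ
      rcases eq_or_lt_of_le (Set.mem_Ici.mp hσ) with h | h
      · rw [← h, laxPsi_self γ ρ p hp.ne', sub_self, zero_mul]
      · simp only [laxPsi, if_neg (not_le.mpr h)]; rfl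
    · rw [laxPsi_self γ ρ p hp.ne', sub_self, zero_mul]
  have := hl.union hrr
  rwa [Set.Iic_union_Ici, hasDerivWithinAt_univ] at this

lemma hasDerivAt_laxPhi (γ ρ p : ℝ) (hγ : 1 < γ) (hρ : 0 < ρ) (hp : 0 < p) :
    HasDerivAt (laxPhi γ ρ p) (ρ / (γ * p)) p := by
  have hγ0 : (0:ℝ) < γ := by linarith
  have hγ1 : (0:ℝ) < γ - 1 := by linarith
  have hγp1 : (0:ℝ) < γ + 1 := by linarith
  set μ2 : ℝ := (γ - 1) / (γ + 1) with hμ2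
  have hμ2pos : 0 < μ2 := div_pos hγ1 hγp1
  have hr : HasDerivAt (fun σ : ℝ => ρ * (σ / p) ^ (1 / γ)) (ρ / (γ * p)) p := by
    have h1 : HasDerivAt (fun σ : ℝ => σ / p) (1 / p) p := by
      simpa using (hasDerivAt_id p).div_const p
    have h2 := (h1.rpow_const (p := 1 / γ) (Or.inl (by simp [div_self hp.ne']))).const_mul ρ
    refine h2.congr_deriv ?_
    rw [div_self hp.ne', Real.one_rpow]
    field_simp
  have hdne : μ2 * p + p ≠ 0 := by positivity
  have hphis : ρ * (p + μ2 * p) / (μ2 * p + p) = ρ := by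
    rw [div_eq_iff hdne]; ring
  have hs : HasDerivAt (fun σ : ℝ => ρ * (σ + μ2 * p) / (μ2 * σ + p)) (ρ / (γ * p)) p := by
    have hnum : HasDerivAt (fun σ : ℝ => ρ * (σ + μ2 * p)) (ρ * 1) p :=
      ((hasDerivAt_id p).add_const (μ2 * p)).const_mul ρ
    have hden : HasDerivAt (fun σ : ℝ => μ2 * σ + p) (μ2 * 1) p :=
      ((hasDerivAt_id p).const_mul μ2).add_const p
    have h3 := hnum.div hden hdne
    refine h3.congr_deriv ?_
    rw [hμ2]
    field_simp
    ring
  have hl : HasDerivWithinAt (laxPhi γ ρ p) (ρ / (γ * p)) (Set.Iic p) p := by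
    apply (hr.hasDerivWithinAt (s := Set.Iic p)).congr
    · intro σ hσ; simp only [laxPhi, if_pos (Set.mem_Iic.mp hσ)]
    · simp only [laxPhi, if_pos le_rfl, div_self hp.ne', Real.one_rpow, mul_one]
  have hrr : HasDerivWithinAt (laxPhi γ ρ p) (ρ / (γ * p)) (Set.Ici p) p := by
    apply (hs.hasDerivWithinAt (s := Set.Ici p)).congr
    · intro σ hσ
      rcases eq_or_lt_of_le (Set.mem_Ici.mp hσ) with h | h
      · rw [← h, laxPhi_self γ ρ p hp.ne', hphis]
      · simp only [laxPhi, if_neg (not_le.mpr h)]; rfl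
    · rw [laxPhi_self γ ρ p hp.ne', hphis]
  have := hl.union hrr
  rwa [Set.Iic_union_Ici, hasDerivWithinAt_univ] at this

/-- At the incoming pipe carrying the maximal entropy, the entropy mix is
non-increasing in that pipe's Lax parameter: if all incoming mass fluxes are negative,
the state of pipe `j₀` is subsonic, and `s̄_{j₀} ≥ s̄_j` for all `j`, then the
derivative at the base pressure of the entropy mix `g(σ)` (pipe `j₀`'s state moved
along its 3-Lax curve, all other pipes held at base) satisfies `g′(p̄_{j₀}) ≤ 0`. -/
theorem entropy_mix_deriv_nonpos_at_max_entropy_pipe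
    (γ cv : ℝ) (hγ : 1 < γ) (hcv : 0 < cv)
    (m : ℕ) (hm : 1 ≤ m)
    (a ρ q E ub pb cb sb : Fin m → ℝ)
    (ha : ∀ j, 0 < a j) (hρ : ∀ j, 0 < ρ j)
    (hub : ∀ j, ub j = q j / ρ j)
    (hpb : ∀ j, pb j = (γ - 1) * (E j - (q j) ^ 2 / (2 * ρ j)))
    (hppos : ∀ j, 0 < pb j)
    (hcb : ∀ j, cb j = Real.sqrt (γ * pb j / ρ j))
    (hsb : ∀ j, sb j = cv * Real.log (pb j / ρ j ^ γ))
    (hq : ∀ j, q j < 0)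
    (j₀ : Fin m)
    (hsub : |ub j₀| < cb j₀)
    (hmax : ∀ j, sb j ≤ sb j₀) :
    deriv
      (fun σ : ℝ =>
        (a j₀ * (laxPhi γ (ρ j₀) (pb j₀) σ * (ub j₀ + laxPsi γ (ρ j₀) (pb j₀) σ)) *
              (cv * Real.log (σ / laxPhi γ (ρ j₀) (pb j₀) σ ^ γ)) +
            ∑ j ∈ Finset.univ.erase j₀, a j * q j * sb j) /
          (a j₀ * (laxPhi γ (ρ j₀) (pb j₀) σ * (ub j₀ + laxPsi γ (ρ j₀) (pb j₀) σ)) +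
            ∑ j ∈ Finset.univ.erase j₀, a j * q j))
      (pb j₀) ≤ 0 := by
  have hγ0 : (0:ℝ) < γ := by linarith
  set P := pb j₀ with hP
  set R := ρ j₀ with hR
  set u := ub j₀ with hu
  set A := a j₀ with hA
  set B := ∑ j ∈ Finset.univ.erase j₀, a j * q j * sb j with hB
  set C := ∑ j ∈ Finset.univ.erase j₀, a j * q j with hC
  have hRpos : 0 < R := hρ j₀
  have hPpos : 0 < P := hppos j₀
  have hφ := hasDerivAt_laxPhi γ R P hγ hRpos hPpos
  have hψ := hasDerivAt_laxPsi γ R P hγ hRpos hPpos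
  set qd : ℝ := R / (γ * P) * (u + laxPsi γ R P P) +
      laxPhi γ R P P * (Real.sqrt (γ * P / R) / (γ * P)) with hqd
  -- derivative of Q
  have hQ : HasDerivAt (fun σ : ℝ => laxPhi γ R P σ * (u + laxPsi γ R P σ)) qd P :=
    hφ.mul (hψ.const_add u)
  -- value of Q at P
  have hQP : laxPhi γ R P P * (u + laxPsi γ R P P) = q j₀ := by
    rw [laxPhi_self γ R P hPpos.ne', laxPsi_self γ R P hPpos.ne', add_zero, hu, hub j₀, ← hR]
    field_simp
  -- qd is nonnegative
  have hqdnn : 0 ≤ qd := by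
    rw [hqd, laxPhi_self γ R P hPpos.ne', laxPsi_self γ R P hPpos.ne', add_zero]
    have hc : cb j₀ = Real.sqrt (γ * P / R) := hcb j₀
    have huc : 0 ≤ u + Real.sqrt (γ * P / R) := by
      rw [← hc]
      have := (abs_lt.mp hsub).1
      linarith
    have h1 : 0 ≤ R / (γ * P) * u + R * (Real.sqrt (γ * P / R) / (γ * P)) := by
      have : R / (γ * P) * u + R * (Real.sqrt (γ * P / R) / (γ * P))
          = R / (γ * P) * (u + Real.sqrt (γ * P / R)) := by ring
      rw [this]
      exact mul_nonneg (by positivity) huc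
    exact h1
  -- derivative of S is zero
  have hRγpos : (0:ℝ) < R ^ γ := Real.rpow_pos_of_pos hRpos γ
  have hφP : laxPhi γ R P P = R := laxPhi_self γ R P hPpos.ne'
  have hS : HasDerivAt (fun σ : ℝ => cv * Real.log (σ / laxPhi γ R P σ ^ γ)) 0 P := by
    have hpow : HasDerivAt (fun σ : ℝ => laxPhi γ R P σ ^ γ)
        (R / (γ * P) * γ * laxPhi γ R P P ^ (γ - 1)) P :=
      hφ.rpow_const (Or.inl (by rw [hφP]; exact hRpos.ne'))
    have hdiv := (hasDerivAt_id' (x := P)).div hpow (by rw [hφP]; exact hRγpos.ne')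
    have hlog := hdiv.log (by show P / laxPhi γ R P P ^ γ ≠ 0; rw [hφP]; positivity)
    have h := hlog.const_mul cv
    refine h.congr_deriv ?_
    rw [hφP]
    have hRγ : R ^ γ = R ^ (γ - 1) * R := by
      have h1 : γ - 1 + 1 = γ := by ring
      rw [← h1, Real.rpow_add_one hRpos.ne', h1]
    have hzero : 1 * R ^ γ - P * (R / (γ * P) * γ * R ^ (γ - 1)) = 0 := by
      rw [hRγ]; field_simp; ring
    rw [hzero]
    simp
  -- value of S at P
  have hSP : cv * Real.log (P / laxPhi γ R P P ^ γ) = sb j₀ := by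
    rw [hφP, hsb j₀]
  -- the denominator at P is negative
  have hDneg : A * q j₀ + C < 0 := by
    have h1 : A * q j₀ + C = ∑ j, a j * q j := by
      rw [hA, hC]
      exact Finset.add_sum_erase Finset.univ (fun j => a j * q j) (Finset.mem_univ j₀)
    rw [h1]
    have : Nonempty (Fin m) := ⟨j₀⟩
    exact Finset.sum_neg (fun j _ => mul_neg_of_pos_of_neg (ha j) (hq j))
      Finset.univ_nonempty
  have hDne : A * (laxPhi γ R P P * (u + laxPsi γ R P P)) + C ≠ 0 := by
    rw [hQP]; exact hDneg.ne
  -- assemble the derivative of g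
  have hNum : HasDerivAt
      (fun σ : ℝ => A * (laxPhi γ R P σ * (u + laxPsi γ R P σ)) *
        (cv * Real.log (σ / laxPhi γ R P σ ^ γ)) + B)
      (A * qd * (cv * Real.log (P / laxPhi γ R P P ^ γ)) +
        A * (laxPhi γ R P P * (u + laxPsi γ R P P)) * 0) P :=
    ((hQ.const_mul A).mul hS).add_const B
  have hDen : HasDerivAt
      (fun σ : ℝ => A * (laxPhi γ R P σ * (u + laxPsi γ R P σ)) + C) (A * qd) P :=
    (hQ.const_mul A).add_const C
  have hg := hNum.div hDen hDne
  erw [hg.deriv]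
  rw [hQP, hSP]
  apply div_nonpos_of_nonpos_of_nonneg _ (sq_nonneg _)
  have hnum : (A * qd * sb j₀ + A * q j₀ * 0) * (A * q j₀ + C) -
      (A * q j₀ * sb j₀ + B) * (A * qd) = A * qd * (sb j₀ * C - B) := by ring
  rw [hnum]
  apply mul_nonpos_of_nonneg_of_nonpos
  · exact mul_nonneg (le_of_lt (ha j₀)) hqdnn
  · have h2 : sb j₀ * C - B = ∑ j ∈ Finset.univ.erase j₀, a j * q j * (sb j₀ - sb j) := by
      rw [hC, hB, Finset.mul_sum, ← Finset.sum_sub_distrib]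
      exact Finset.sum_congr rfl (fun j _ => by ring)
    rw [h2]
    exact Finset.sum_nonpos (fun j _ => mul_nonpos_of_nonpos_of_nonneg
      (le_of_lt (mul_neg_of_pos_of_neg (ha j) (hq j))) (sub_nonneg.mpr (hmax j)))
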